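/- Suppose α < β are real numbers, B ≠ 0, and there exists x̄ ∈ ℝⁿ with α < h(x̄) < β. Then strong duality holds: the infimum of f(x) over {x ∈ ℝⁿ : α ≤ h(x) ≤ β} equals the supremum over μ ∈ ℝ of inf_{x ∈ ℝⁿ} [f(x) + μ₋(h(x) − β) + μ₊(α − h(x))], where both optimal values are taken in the extended reals. -/

import Mathlib

open Matrix

/-- The quadratic function `x ↦ xᵀ M x + 2 mᵀ x + r`. -/
noncomputable def qfun {n : ℕ} (M : Matrix (Fin n) (Fin n) ℝ) (m : Fin n → ℝ) (r : ℝ)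
    (x : Fin n → ℝ) : ℝ :=
  x ⬝ᵥ M *ᵥ x + 2 * (m ⬝ᵥ x) + r

/-! ### Basic algebra helpers -/

lemma dot_symm {n : ℕ} {M : Matrix (Fin n) (Fin n) ℝ} (hM : M.IsSymm) (x y : Fin n → ℝ) :
    x ⬝ᵥ M *ᵥ y = y ⬝ᵥ M *ᵥ x := by
  rw [Matrix.dotProduct_mulVec, ← Matrix.vecMul_transpose, hM, dotProduct_comm]

lemma qfun_line {n : ℕ} {M : Matrix (Fin n) (Fin n) ℝ} (hM : M.IsSymm) (m : Fin n → ℝ) (r : ℝ)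
    (x v : Fin n → ℝ) (t : ℝ) :
    qfun M m r (x + t • v) =
      qfun M m r x + (2 * (x ⬝ᵥ M *ᵥ v) + 2 * (m ⬝ᵥ v)) * t + (v ⬝ᵥ M *ᵥ v) * t ^ 2 := by
  simp only [qfun, Matrix.mulVec_add, Matrix.mulVec_smul, dotProduct_add, add_dotProduct,
    dotProduct_smul, smul_dotProduct, smul_eq_mul, dot_symm hM v x]
  ring

lemma quad_big (q l c M T : ℝ) (hq : 0 < q) : ∃ t, t ≤ T ∧ M < q * t ^ 2 + l * t + c := by
  set t := min T (min (-1) (-(|l| + |M - c| + 1) / q)) with ht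
  refine ⟨t, min_le_left _ _, ?_⟩
  have ht1 : t ≤ -1 := le_trans (min_le_right _ _) (min_le_left _ _)
  have ht2 : t ≤ -(|l| + |M - c| + 1) / q := le_trans (min_le_right _ _) (min_le_right _ _)
  have h3 : t * q ≤ -(|l| + |M - c| + 1) := (le_div_iff₀ hq).mp ht2
  nlinarith [le_abs_self l, neg_abs_le l, le_abs_self (M - c), neg_abs_le (M - c),
    mul_le_mul_of_nonpos_left h3 (by linarith : t ≤ 0)]

lemma quad_small (q l c M T : ℝ) (hq : q < 0) : ∃ t, T ≤ t ∧ q * t ^ 2 + l * t + c < M := by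
  obtain ⟨t, h1, h2⟩ := quad_big (-q) l (-c) (-M) (-T) (by linarith)
  exact ⟨-t, by linarith, by nlinarith⟩

lemma small_pert (q l c r : ℝ) (hc : c < r) :
    ∃ ε > 0, ∀ s : ℝ, -ε ≤ s → s ≤ ε → q * s ^ 2 + l * s + c < r := by
  refine ⟨min 1 ((r - c) / (|l| + |q| + 1)),
    lt_min one_pos (div_pos (by linarith) (by positivity)), ?_⟩
  intro s h1 h2
  have hs : |s| ≤ min 1 ((r - c) / (|l| + |q| + 1)) := abs_le.2 ⟨by linarith, h2⟩
  have hs1 : |s| ≤ 1 := le_trans hs (min_le_left _ _)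
  have hs2 : |s| * (|l| + |q| + 1) ≤ r - c := by
    rw [← le_div_iff₀ (by positivity)]; exact le_trans hs (min_le_right _ _)
  have e1 : l * s ≤ |l| * |s| := by rw [← abs_mul]; exact le_abs_self _
  have e2 : q * s ^ 2 ≤ |q| * s ^ 2 :=
    mul_le_mul_of_nonneg_right (le_abs_self q) (sq_nonneg s)
  have e3 : s ^ 2 = |s| * |s| := by rw [abs_mul_abs_self]; ring
  have k1 : |s| * |s| ≤ |s| := mul_le_of_le_one_left (abs_nonneg s) hs1
  rcases eq_or_lt_of_le (abs_nonneg s) with h0 | h0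
  · have : s = 0 := abs_eq_zero.mp h0.symm
    simpa [this] using hc
  · nlinarith [abs_nonneg l, abs_nonneg q, mul_le_mul_of_nonneg_left k1 (abs_nonneg q)]

lemma form_zero {n : ℕ} {B : Matrix (Fin n) (Fin n) ℝ} (hB : B.IsSymm)
    (h : ∀ w : Fin n → ℝ, w ⬝ᵥ B *ᵥ w = 0) : B = 0 := by
  ext i j
  have hij := h (Pi.single i 1 + Pi.single j 1)
  have hi := h (Pi.single i 1)
  have hj := h (Pi.single j 1)
  simp only [Matrix.mulVec_add, dotProduct_add, add_dotProduct] at hij hi hj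
  simp only [Matrix.mulVec_single, single_dotProduct, one_mul, Pi.smul_apply,
    op_smul_eq_mul, Matrix.col_apply, mul_one] at hij hi hj
  have hsym : B j i = B i j := by
    have := congrFun (congrFun hB i) j
    simpa [Matrix.transpose_apply] using this
  simp only [Matrix.zero_apply, mul_one, one_mul] at *
  linarith

/-! ### The key two-sided lemma : the bad configuration forces `B = 0` -/

section KeyPair
variable {n : ℕ} {A B : Matrix (Fin n) (Fin n) ℝ} {a b : Fin n → ℝ} {c d α β : ℝ}

lemma key_pair (hA : A.IsSymm) (hB : B.IsSymm) (hαβ : α ≤ β)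
    (hf : ∀ z, α ≤ qfun B b d z → qfun B b d z ≤ β → 0 ≤ qfun A a c z)
    (x y : Fin n → ℝ) (hfx : qfun A a c x < 0) (hhx : qfun B b d x < α)
    (hfy : qfun A a c y < 0) (hhy : β < qfun B b d y) :
    (y - x) ⬝ᵥ B *ᵥ (y - x) = 0 := by
  set v := y - x with hv
  set qA : ℝ := v ⬝ᵥ A *ᵥ v with hqA
  set lA : ℝ := 2 * (x ⬝ᵥ A *ᵥ v) + 2 * (a ⬝ᵥ v) with hlA
  set cA : ℝ := qfun A a c x with hcA
  set qB : ℝ := v ⬝ᵥ B *ᵥ v with hqB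
  set lB : ℝ := 2 * (x ⬝ᵥ B *ᵥ v) + 2 * (b ⬝ᵥ v) with hlB
  set cB : ℝ := qfun B b d x with hcB
  have hFline : ∀ t : ℝ, qfun A a c (x + t • v) = cA + lA * t + qA * t ^ 2 := by
    intro t; rw [qfun_line hA]; try ring
  have hHline : ∀ t : ℝ, qfun B b d (x + t • v) = cB + lB * t + qB * t ^ 2 := by
    intro t; rw [qfun_line hB]; try ring
  have hy1 : x + (1 : ℝ) • v = y := by rw [hv]; simp
  have hHcont : Continuous (fun t : ℝ => cB + lB * t + qB * t ^ 2) := by fun_prop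
  have hF1 : cA + lA * 1 + qA * 1 ^ 2 < 0 := by rw [← hFline 1, hy1]; exact hfy
  have hH1 : β < cB + lB * 1 + qB * 1 ^ 2 := by rw [← hHline 1, hy1]; exact hhy
  -- Step 1 : exists s in (0,1) with F s ≥ 0
  have hex : ∃ s, 0 ≤ s ∧ s ≤ 1 ∧ 0 ≤ cA + lA * s + qA * s ^ 2 := by
    by_contra hcon
    push_neg at hcon
    have hmem : α ∈ Set.Icc ((fun t : ℝ => cB + lB * t + qB * t ^ 2) 0)
        ((fun t : ℝ => cB + lB * t + qB * t ^ 2) 1) := by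
      constructor
      · show cB + lB * 0 + qB * 0 ^ 2 ≤ α
        linarith
      · exact le_of_lt (lt_of_le_of_lt hαβ hH1)
    obtain ⟨s, hs, hval⟩ := intermediate_value_Icc (by norm_num : (0:ℝ) ≤ 1)
      (hHcont.continuousOn) hmem
    have hval' : cB + lB * s + qB * s ^ 2 = α := hval
    have h1 : qfun B b d (x + s • v) = α := by rw [hHline]; exact hval'
    have h2 : 0 ≤ qfun A a c (x + s • v) := hf _ (le_of_eq h1.symm) (h1 ▸ hαβ)
    rw [hFline] at h2
    exact absurd h2 (not_le.mpr (hcon s hs.1 hs.2))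
  obtain ⟨s, hs0, hs1, hFs⟩ := hex
  have hF0 : cA + lA * 0 + qA * 0 ^ 2 < 0 := by
    have : cA + lA * 0 + qA * 0 ^ 2 = cA := by ring
    rw [this]; exact hfx
  have hs0' : 0 < s := by
    rcases eq_or_lt_of_le hs0 with h | h
    · exfalso; rw [← h] at hFs; linarith
    · exact h
  have hs1' : s < 1 := by
    rcases eq_or_lt_of_le hs1 with h | h
    · exfalso; rw [h] at hFs; linarith
    · exact h
  -- Step 2 : qA < 0
  have hqAneg : qA < 0 := by
    by_contra hcon
    push_neg at hcon
    have t1 : s * (cA + lA * 1 + qA * 1 ^ 2) < 0 := mul_neg_of_pos_of_neg hs0' hF1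
    have t2 : (1 - s) * (cA + lA * 0 + qA * 0 ^ 2) < 0 :=
      mul_neg_of_pos_of_neg (by linarith) hF0
    have t3 : 0 ≤ qA * (s * (1 - s)) :=
      mul_nonneg hcon (mul_nonneg hs0 (by linarith))
    linarith [hFs, t1, t2, t3]
  -- Step 3 : F t < 0 for t ≤ 0
  have hFneg_left : ∀ t : ℝ, t ≤ 0 → cA + lA * t + qA * t ^ 2 < 0 := by
    intro t ht
    have u1 : t * (cA + lA * s + qA * s ^ 2) ≤ 0 := mul_nonpos_of_nonpos_of_nonneg ht hFs
    have u2 : (s - t) * cA < 0 := mul_neg_of_pos_of_neg (by linarith) hfx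
    have u3 : qA * (s * t * (t - s)) ≤ 0 := by
      apply mul_nonpos_of_nonpos_of_nonneg (le_of_lt hqAneg)
      have hst : s * t ≤ 0 := mul_nonpos_of_nonneg_of_nonpos hs0 ht
      nlinarith [hst]
    have hmain : s * (cA + lA * t + qA * t ^ 2) < 0 := by linarith [u1, u2, u3]
    by_contra hcon
    push_neg at hcon
    linarith [mul_nonneg (le_of_lt hs0') hcon]
  -- Step 4 : F t < 0 for t ≥ 1
  have hFneg_right : ∀ t : ℝ, 1 ≤ t → cA + lA * t + qA * t ^ 2 < 0 := by
    intro t ht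
    have u1 : (t - s) * (cA + lA * 1 + qA * 1 ^ 2) < 0 :=
      mul_neg_of_pos_of_neg (by linarith) hF1
    have u2 : (t - 1) * (cA + lA * s + qA * s ^ 2) ≥ 0 :=
      mul_nonneg (by linarith) hFs
    have u3 : qA * ((t - 1) * (t - s) * (1 - s)) ≤ 0 := by
      apply mul_nonpos_of_nonpos_of_nonneg (le_of_lt hqAneg)
      have h1 : (0:ℝ) ≤ t - 1 := by linarith
      have h2 : (0:ℝ) ≤ t - s := by linarith
      have h3 : (0:ℝ) ≤ 1 - s := by linarith
      positivity
    have hmain : (1 - s) * (cA + lA * t + qA * t ^ 2) < 0 := by linarith [u1, u2, u3]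
    by_contra hcon
    push_neg at hcon
    linarith [mul_nonneg (by linarith : (0:ℝ) ≤ 1 - s) hcon]
  -- Step 5 : H t < α for all t ≤ 0
  have hHleft : ∀ t : ℝ, t ≤ 0 → cB + lB * t + qB * t ^ 2 < α := by
    intro t ht
    by_contra hcon
    push_neg at hcon
    have hout : ∀ u : ℝ, t ≤ u → u ≤ 0 → ¬(α ≤ cB + lB * u + qB * u ^ 2 ∧
        cB + lB * u + qB * u ^ 2 ≤ β) := by
      intro u h1 h2 ⟨ha, hb⟩
      have := hf (x + u • v) (by rw [hHline]; exact ha) (by rw [hHline]; exact hb)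
      rw [hFline] at this
      exact absurd this (not_le.mpr (hFneg_left u h2))
    have htβ : β < cB + lB * t + qB * t ^ 2 := by
      rcases lt_or_ge β (cB + lB * t + qB * t ^ 2) with h | h
      · exact h
      · exact absurd ⟨hcon, h⟩ (hout t le_rfl ht)
    have hmem : α ∈ Set.Icc ((fun u : ℝ => cB + lB * u + qB * u ^ 2) 0)
        ((fun u : ℝ => cB + lB * u + qB * u ^ 2) t) := by
      constructor
      · show cB + lB * 0 + qB * 0 ^ 2 ≤ α
        linarith
      · exact le_of_lt (lt_of_le_of_lt hαβ htβ)
    obtain ⟨u, hu, hval⟩ := intermediate_value_Icc' ht (hHcont.continuousOn) hmem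
    have hval' : cB + lB * u + qB * u ^ 2 = α := hval
    exact hout u hu.1 hu.2 ⟨le_of_eq hval'.symm, by linarith⟩
  -- Step 6 : H t > β for all t ≥ 1
  have hHright : ∀ t : ℝ, 1 ≤ t → β < cB + lB * t + qB * t ^ 2 := by
    intro t ht
    by_contra hcon
    push_neg at hcon
    have hout : ∀ u : ℝ, 1 ≤ u → u ≤ t → ¬(α ≤ cB + lB * u + qB * u ^ 2 ∧
        cB + lB * u + qB * u ^ 2 ≤ β) := by
      intro u h1 h2 ⟨ha, hb⟩
      have := hf (x + u • v) (by rw [hHline]; exact ha) (by rw [hHline]; exact hb)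
      rw [hFline] at this
      exact absurd this (not_le.mpr (hFneg_right u h1))
    have htα : cB + lB * t + qB * t ^ 2 < α := by
      rcases lt_or_ge (cB + lB * t + qB * t ^ 2) α with h | h
      · exact h
      · exact absurd ⟨h, hcon⟩ (hout t ht le_rfl)
    have hmem : β ∈ Set.Icc ((fun u : ℝ => cB + lB * u + qB * u ^ 2) t)
        ((fun u : ℝ => cB + lB * u + qB * u ^ 2) 1) := by
      constructor
      · exact le_of_lt (lt_of_lt_of_le htα hαβ)
      · exact le_of_lt hH1
    obtain ⟨u, hu, hval⟩ := intermediate_value_Icc' ht (hHcont.continuousOn) hmem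
    have hval' : cB + lB * u + qB * u ^ 2 = β := hval
    exact hout u hu.1 hu.2 ⟨by linarith, le_of_eq hval'⟩
  -- Step 7 : qB = 0
  rcases lt_trichotomy qB 0 with h | h | h
  · obtain ⟨t, ht, hval⟩ := quad_small qB lB cB β 1 h
    exact absurd (hHright t ht) (not_lt.mpr (by linarith))
  · exact h
  · obtain ⟨t, ht, hval⟩ := quad_big qB lB cB α 0 h
    exact absurd (hHleft t ht) (not_lt.mpr (by linarith))

lemma key_lemma (hA : A.IsSymm) (hB : B.IsSymm) (hαβ : α ≤ β)
    (hf : ∀ z, α ≤ qfun B b d z → qfun B b d z ≤ β → 0 ≤ qfun A a c z)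
    (x₁ x₂ : Fin n → ℝ) (hfx : qfun A a c x₁ < 0) (hhx : qfun B b d x₁ < α)
    (hfy : qfun A a c x₂ < 0) (hhy : β < qfun B b d x₂) :
    B = 0 := by
  apply form_zero hB
  intro w
  obtain ⟨ε₁, hε₁, hp1⟩ := small_pert (w ⬝ᵥ A *ᵥ w) (2 * (x₁ ⬝ᵥ A *ᵥ w) + 2 * (a ⬝ᵥ w))
    (qfun A a c x₁) 0 hfx
  obtain ⟨ε₂, hε₂, hp2⟩ := small_pert (w ⬝ᵥ B *ᵥ w) (2 * (x₁ ⬝ᵥ B *ᵥ w) + 2 * (b ⬝ᵥ w))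
    (qfun B b d x₁) α hhx
  set ε := min ε₁ ε₂ with hε
  have hεpos : 0 < ε := lt_min hε₁ hε₂
  have hcond : ∀ s : ℝ, -ε ≤ s → s ≤ ε →
      qfun A a c (x₁ + s • w) < 0 ∧ qfun B b d (x₁ + s • w) < α := by
    intro s h1 h2
    constructor
    · rw [qfun_line hA]
      have := hp1 s (by simp only [hε] at h1 ⊢; linarith [min_le_left ε₁ ε₂])
        (by linarith [min_le_left ε₁ ε₂])
      linarith
    · rw [qfun_line hB]
      have := hp2 s (by linarith [min_le_right ε₁ ε₂]) (by linarith [min_le_right ε₁ ε₂])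
      linarith
  have hzero : ∀ s : ℝ, -ε ≤ s → s ≤ ε →
      (x₂ - (x₁ + s • w)) ⬝ᵥ B *ᵥ (x₂ - (x₁ + s • w)) = 0 := by
    intro s h1 h2
    obtain ⟨hfa, hha⟩ := hcond s h1 h2
    exact key_pair hA hB hαβ hf _ x₂ hfa hha hfy hhy
  set v₀ := x₂ - x₁ with hv₀
  have hrw : ∀ s : ℝ, x₂ - (x₁ + s • w) = v₀ + s • (-w) := by
    intro s; rw [hv₀]; ext k; simp; ring
  have hexp : ∀ s : ℝ, -ε ≤ s → s ≤ ε →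
      qfun B 0 0 (v₀ + s • (-w)) = 0 := by
    intro s h1 h2
    have := hzero s h1 h2
    rw [hrw] at this
    simpa [qfun] using this
  have key : ∀ s : ℝ, -ε ≤ s → s ≤ ε →
      qfun B 0 0 v₀ + (2 * (v₀ ⬝ᵥ B *ᵥ (-w)) + 2 * ((0 : Fin n → ℝ) ⬝ᵥ (-w))) * s
        + ((-w) ⬝ᵥ B *ᵥ (-w)) * s ^ 2 = 0 := by
    intro s h1 h2
    rw [← qfun_line hB]
    exact hexp s h1 h2
  have k0 := key 0 (by linarith) (by linarith)
  have k1 := key ε (by linarith) le_rfl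
  have k2 := key (-ε) le_rfl (by linarith)
  have hw : (-w) ⬝ᵥ B *ᵥ (-w) = w ⬝ᵥ B *ᵥ w := by
    rw [Matrix.mulVec_neg, neg_dotProduct, dotProduct_neg, neg_neg]
  rw [hw] at k1 k2
  have hsq : (w ⬝ᵥ B *ᵥ w) * ε ^ 2 = 0 := by nlinarith [k0, k1, k2]
  have : ε ^ 2 ≠ 0 := pow_ne_zero _ (ne_of_gt hεpos)
  exact (mul_eq_zero.mp hsq).resolve_right this
end KeyPair

/-! ### Homogenized quadratic forms and Dines' theorem -/

section Hom
variable {n : ℕ}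

/-- homogenized quadratic form on `(Fin n → ℝ) × ℝ` -/
noncomputable def hQ (M : Matrix (Fin n) (Fin n) ℝ) (m : Fin n → ℝ) (r : ℝ)
    (z : (Fin n → ℝ) × ℝ) : ℝ :=
  z.1 ⬝ᵥ M *ᵥ z.1 + 2 * z.2 * (m ⬝ᵥ z.1) + r * z.2 ^ 2

noncomputable def hBil (M : Matrix (Fin n) (Fin n) ℝ) (m : Fin n → ℝ) (r : ℝ)
    (z w : (Fin n → ℝ) × ℝ) : ℝ :=
  z.1 ⬝ᵥ M *ᵥ w.1 + z.2 * (m ⬝ᵥ w.1) + w.2 * (m ⬝ᵥ z.1) + r * z.2 * w.2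

variable {M M₁ M₂ : Matrix (Fin n) (Fin n) ℝ} {m m₁ m₂ : Fin n → ℝ} {r r₁ r₂ : ℝ}

lemma hQ_smul (s : ℝ) (z : (Fin n → ℝ) × ℝ) : hQ M m r (s • z) = s ^ 2 * hQ M m r z := by
  simp only [hQ, Prod.smul_fst, Prod.smul_snd, Matrix.mulVec_smul, dotProduct_smul,
    smul_dotProduct, smul_eq_mul]
  ring

lemma hQ_comb (hM : M.IsSymm) (p q : ℝ) (z w : (Fin n → ℝ) × ℝ) :
    hQ M m r (p • z + q • w) =
      p ^ 2 * hQ M m r z + q ^ 2 * hQ M m r w + 2 * p * q * hBil M m r z w := by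
  simp only [hQ, hBil, Prod.fst_add, Prod.snd_add, Prod.smul_fst, Prod.smul_snd,
    Matrix.mulVec_add, Matrix.mulVec_smul, dotProduct_add, add_dotProduct,
    dotProduct_smul, smul_dotProduct, smul_eq_mul, dot_symm hM w.1 z.1]
  ring

lemma hQ_lin (t₁ t₂ : ℝ) (z : (Fin n → ℝ) × ℝ) :
    hQ (t₁ • M₁ + t₂ • M₂) (t₁ • m₁ + t₂ • m₂) (t₁ * r₁ + t₂ * r₂) z =
      t₁ * hQ M₁ m₁ r₁ z + t₂ * hQ M₂ m₂ r₂ z := by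
  simp only [hQ, Matrix.add_mulVec, Matrix.smul_mulVec, dotProduct_add, add_dotProduct,
    dotProduct_smul, smul_dotProduct, smul_eq_mul]
  ring

lemma isSymm_comb (hM1 : M₁.IsSymm) (hM2 : M₂.IsSymm) (t₁ t₂ : ℝ) :
    (t₁ • M₁ + t₂ • M₂).IsSymm := by
  unfold Matrix.IsSymm
  rw [Matrix.transpose_add, Matrix.transpose_smul, Matrix.transpose_smul, hM1, hM2]

lemma dines_core (hM1 : M₁.IsSymm) (hM2 : M₂.IsSymm) (z₀ z₁ : (Fin n → ℝ) × ℝ)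
    (h0 : hQ M₂ m₂ r₂ z₀ = 1) (h1 : hQ M₂ m₂ r₂ z₁ = 1) (m' : ℝ)
    (hm : m' ∈ Set.uIcc (hQ M₁ m₁ r₁ z₀) (hQ M₁ m₁ r₁ z₁)) :
    ∃ y, hQ M₂ m₂ r₂ y = 1 ∧ hQ M₁ m₁ r₁ y = m' := by
  set a₀ := hQ M₁ m₁ r₁ z₀ with ha₀
  set a₁ := hQ M₁ m₁ r₁ z₁ with ha₁
  set κ := hBil M₁ m₁ r₁ z₀ z₁ with hκ
  set ρ := hBil M₂ m₂ r₂ z₀ z₁ with hρ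
  have master : ∀ (c₁ c₂ : ℝ → ℝ) (T : ℝ), Continuous c₁ → Continuous c₂ →
      (∀ t, c₁ t ^ 2 + c₂ t ^ 2 + 2 * (c₁ t) * (c₂ t) * ρ = 1) →
      c₁ 0 = 1 → c₂ 0 = 0 → c₁ T = 0 → c₂ T ^ 2 = 1 →
      ∃ y, hQ M₂ m₂ r₂ y = 1 ∧ hQ M₁ m₁ r₁ y = m' := by
    intro c₁ c₂ T hc₁ hc₂ hinv he₁ he₂ he₃ he₄
    set g : ℝ → ℝ := fun t => (c₁ t) ^ 2 * a₀ + (c₂ t) ^ 2 * a₁ + 2 * (c₁ t) * (c₂ t) * κ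
      with hg
    have hgc : Continuous g := by fun_prop
    have hg0 : g 0 = a₀ := by simp only [hg]; rw [he₁, he₂]; ring
    have hgT : g T = a₁ := by simp only [hg]; rw [he₃]; linear_combination a₁ * he₄
    have hmem : m' ∈ Set.uIcc (g 0) (g T) := by rw [hg0, hgT]; exact hm
    obtain ⟨t, _, hgt⟩ := intermediate_value_uIcc (hgc.continuousOn (s := Set.uIcc 0 T)) hmem
    refine ⟨(c₁ t) • z₀ + (c₂ t) • z₁, ?_, ?_⟩
    · rw [hQ_comb hM2, h0, h1, ← hρ]
      have := hinv t; linarith [this]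
    · rw [hQ_comb hM1, ← ha₀, ← ha₁, ← hκ]
      rw [hg] at hgt; simp only at hgt; linarith [hgt]
  rcases lt_trichotomy (ρ ^ 2) 1 with hc | hc | hc
  · -- ellipse case
    set w := Real.sqrt (1 - ρ ^ 2) with hw
    have hw2 : w ^ 2 = 1 - ρ ^ 2 := Real.sq_sqrt (by nlinarith)
    have hw0 : 0 < w := Real.sqrt_pos.mpr (by nlinarith)
    have hw0' : w ≠ 0 := ne_of_gt hw0
    set ν := w⁻¹ with hνdef
    have hνw : ν * w = 1 := inv_mul_cancel₀ hw0'
    have hν : ν ^ 2 * (1 - ρ ^ 2) = 1 := by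
      linear_combination (-(ν ^ 2)) * hw2 + (ν * w + 1) * hνw
    have hcρ : Real.cos (Real.arccos ρ) = ρ := Real.cos_arccos (by nlinarith) (by nlinarith)
    have hsρ : Real.sin (Real.arccos ρ) = w := by rw [Real.sin_arccos, hw]
    refine master (fun θ => Real.cos θ - ρ * (ν * Real.sin θ)) (fun θ => ν * Real.sin θ)
      (Real.arccos ρ) (by fun_prop) (by fun_prop) ?_ (by simp) (by simp) ?_ ?_
    · intro t
      have hpy := Real.sin_sq_add_cos_sq t
      show (Real.cos t - ρ * (ν * Real.sin t)) ^ 2 + (ν * Real.sin t) ^ 2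
        + 2 * (Real.cos t - ρ * (ν * Real.sin t)) * (ν * Real.sin t) * ρ = 1
      linear_combination (Real.sin t ^ 2) * hν + hpy
    · show Real.cos (Real.arccos ρ) - ρ * (ν * Real.sin (Real.arccos ρ)) = 0
      rw [hcρ, hsρ]
      linear_combination (-ρ) * hνw
    · show (ν * Real.sin (Real.arccos ρ)) ^ 2 = 1
      rw [hsρ]
      linear_combination (ν * w + 1) * hνw
  · -- degenerate case
    refine master (fun t => 1 - ρ * t) (fun t => t) ρ (by fun_prop) (by fun_prop) ?_
      (by norm_num) rfl ?_ ?_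
    · intro t; linear_combination (-(t ^ 2)) * hc
    · show 1 - ρ * ρ = 0
      linear_combination -hc
    · show ρ ^ 2 = 1
      exact hc
  · -- hyperbola case
    set w := Real.sqrt (ρ ^ 2 - 1) with hw
    have hw2 : w ^ 2 = ρ ^ 2 - 1 := Real.sq_sqrt (by nlinarith)
    have hw0 : 0 < w := Real.sqrt_pos.mpr (by nlinarith)
    set ε : ℝ := if 0 ≤ ρ then 1 else -1 with hε
    have hε2 : ε ^ 2 = 1 := by rw [hε]; split <;> norm_num
    have hερ : ε * ρ = |ρ| := by
      rw [hε]; split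
      · simp [abs_of_nonneg ‹_›]
      · rw [abs_of_neg (lt_of_not_ge ‹_›)]; ring
    set s₁ := Real.arsinh (ε * w) with hs₁
    have hsinh : Real.sinh s₁ = ε * w := Real.sinh_arsinh _
    have hcosh : Real.cosh s₁ = |ρ| := by
      rw [hs₁, Real.cosh_arsinh]
      rw [show 1 + (ε * w) ^ 2 = ρ ^ 2 by nlinarith]
      exact Real.sqrt_sq_eq_abs ρ
    have hw0' : w ≠ 0 := ne_of_gt hw0
    set ν := w⁻¹ with hνdef
    have hνw : ν * w = 1 := inv_mul_cancel₀ hw0'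
    have hν : ν ^ 2 * (ρ ^ 2 - 1) = 1 := by
      linear_combination (-(ν ^ 2)) * hw2 + (ν * w + 1) * hνw
    refine master (fun s => Real.cosh s - ρ * (ν * Real.sinh s)) (fun s => ν * Real.sinh s)
      s₁ (by fun_prop) (by fun_prop) ?_ (by simp) (by simp) ?_ ?_
    · intro t
      have hpy := Real.cosh_sq_sub_sinh_sq t
      show (Real.cosh t - ρ * (ν * Real.sinh t)) ^ 2 + (ν * Real.sinh t) ^ 2
        + 2 * (Real.cosh t - ρ * (ν * Real.sinh t)) * (ν * Real.sinh t) * ρ = 1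
      linear_combination (-(Real.sinh t ^ 2)) * hν + hpy
    · show Real.cosh s₁ - ρ * (ν * Real.sinh s₁) = 0
      rw [hsinh, hcosh, ← hερ]
      linear_combination (-(ρ * ε)) * hνw
    · show (ν * Real.sinh s₁) ^ 2 = 1
      rw [hsinh]
      linear_combination (ε ^ 2 * (ν * w + 1)) * hνw + hε2

lemma dines (hM1 : M₁.IsSymm) (hM2 : M₂.IsSymm) :
    Convex ℝ {p : ℝ × ℝ | ∃ z, hQ M₁ m₁ r₁ z = p.1 ∧ hQ M₂ m₂ r₂ z = p.2} := by
  rintro p₀ ⟨z₀, hz01, hz02⟩ p₁ ⟨z₁, hz11, hz12⟩ u v hu hv huv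
  simp only [Set.mem_setOf_eq, Prod.fst_add, Prod.snd_add, Prod.smul_fst, Prod.smul_snd,
    smul_eq_mul]
  by_cases hdet : p₀.1 * p₁.2 - p₀.2 * p₁.1 = 0
  · -- dependent case
    by_cases hp0 : p₀ = (0 : ℝ × ℝ)
    · refine ⟨Real.sqrt v • z₁, ?_, ?_⟩
      · rw [hQ_smul, Real.sq_sqrt hv, hz11, hp0]
        simp
      · rw [hQ_smul, Real.sq_sqrt hv, hz12, hp0]
        simp
    · have hne : p₀.1 ≠ 0 ∨ p₀.2 ≠ 0 := by
        by_contra hcon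
        push_neg at hcon
        exact hp0 (Prod.ext hcon.1 hcon.2)
      obtain ⟨s, hs1, hs2⟩ : ∃ s : ℝ, p₁.1 = s * p₀.1 ∧ p₁.2 = s * p₀.2 := by
        rcases hne with h | h
        · refine ⟨p₁.1 / p₀.1, by field_simp, ?_⟩
          field_simp
          first
          | linear_combination hdet
          | linear_combination -hdet
          | linear_combination p₀.1 * hdet
          | linear_combination (-p₀.1) * hdet
        · refine ⟨p₁.2 / p₀.2, ?_, by field_simp⟩
          field_simp
          first
          | linear_combination hdet
          | linear_combination -hdet
          | linear_combination p₀.2 * hdet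
          | linear_combination (-p₀.2) * hdet
      rcases le_or_gt 0 (u + v * s) with hc | hc
      · refine ⟨Real.sqrt (u + v * s) • z₀, ?_, ?_⟩ <;>
          rw [hQ_smul, Real.sq_sqrt hc]
        · rw [hz01, hs1]; ring
        · rw [hz02, hs2]; ring
      · have hvpos : 0 < v ∧ s < 0 := by
          constructor
          · rcases eq_or_lt_of_le hv with h | h
            · exfalso; rw [← h] at hc; linarith
            · exact h
          · by_contra hcon
            push_neg at hcon
            nlinarith
        have hs0 : s ≠ 0 := ne_of_lt hvpos.2
        have hcs : 0 ≤ (u + v * s) / s :=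
          div_nonneg_iff.mpr (Or.inr ⟨le_of_lt hc, le_of_lt hvpos.2⟩)
        refine ⟨Real.sqrt ((u + v * s) / s) • z₁, ?_, ?_⟩ <;>
          rw [hQ_smul, Real.sq_sqrt hcs]
        · rw [hz11, hs1]; field_simp
        · rw [hz12, hs2]; field_simp
  · -- independent case
    set D := p₀.1 * p₁.2 - p₀.2 * p₁.1 with hD
    set τ₁ := (p₁.2 - p₀.2) / D with hτ₁
    set τ₂ := (p₀.1 - p₁.1) / D with hτ₂
    have hτ0 : τ₁ * p₀.1 + τ₂ * p₀.2 = 1 := by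
      rw [hτ₁, hτ₂]; field_simp; ring
    have hτp1 : τ₁ * p₁.1 + τ₂ * p₁.2 = 1 := by
      rw [hτ₁, hτ₂]; field_simp; ring
    have hττ : τ₁ ^ 2 + τ₂ ^ 2 ≠ 0 := by
      intro h
      have h1 : τ₁ = 0 := by nlinarith [sq_nonneg τ₁, sq_nonneg τ₂]
      have h2 : τ₂ = 0 := by nlinarith [sq_nonneg τ₁, sq_nonneg τ₂]
      rw [h1, h2] at hτ0; norm_num at hτ0
    have hsymτ := isSymm_comb hM1 hM2 τ₁ τ₂
    have hsymσ := isSymm_comb hM1 hM2 (-τ₂) τ₁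
    set m' := (-τ₂) * (u * p₀.1 + v * p₁.1) + τ₁ * (u * p₀.2 + v * p₁.2) with hm'
    have hq0 : hQ (τ₁ • M₁ + τ₂ • M₂) (τ₁ • m₁ + τ₂ • m₂) (τ₁ * r₁ + τ₂ * r₂) z₀ = 1 := by
      rw [hQ_lin, hz01, hz02]; exact hτ0
    have hq1 : hQ (τ₁ • M₁ + τ₂ • M₂) (τ₁ • m₁ + τ₂ • m₂) (τ₁ * r₁ + τ₂ * r₂) z₁ = 1 := by
      rw [hQ_lin, hz11, hz12]; exact hτp1
    have hmem : m' ∈ Set.uIcc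
        (hQ ((-τ₂) • M₁ + τ₁ • M₂) ((-τ₂) • m₁ + τ₁ • m₂) ((-τ₂) * r₁ + τ₁ * r₂) z₀)
        (hQ ((-τ₂) • M₁ + τ₁ • M₂) ((-τ₂) • m₁ + τ₁ • m₂) ((-τ₂) * r₁ + τ₁ * r₂) z₁) := by
      rw [hQ_lin, hQ_lin, hz01, hz02, hz11, hz12]
      set A0 := (-τ₂) * p₀.1 + τ₁ * p₀.2
      set A1 := (-τ₂) * p₁.1 + τ₁ * p₁.2
      have hmeq : m' = u * A0 + v * A1 := by rw [hm']; ring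
      have hA0 : u * A0 + v * A0 = A0 := by linear_combination A0 * huv
      have hA1 : u * A1 + v * A1 = A1 := by linear_combination A1 * huv
      rcases le_total A0 A1 with h | h
      · rw [Set.uIcc_of_le h]
        constructor
        · linarith [hmeq, hA0, mul_nonneg hv (sub_nonneg.2 h)]
        · linarith [hmeq, hA1, mul_nonneg hu (sub_nonneg.2 h)]
      · rw [Set.uIcc_of_ge h]
        constructor
        · linarith [hmeq, hA1, mul_nonneg hu (sub_nonneg.2 h)]
        · linarith [hmeq, hA0, mul_nonneg hv (sub_nonneg.2 h)]
    obtain ⟨y, hy2, hy1⟩ := dines_core hsymσ hsymτ z₀ z₁ hq0 hq1 m' hmem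
    rw [hQ_lin] at hy2 hy1
    have hT : τ₁ * (u * p₀.1 + v * p₁.1) + τ₂ * (u * p₀.2 + v * p₁.2) = 1 := by
      linear_combination u * hτ0 + v * hτp1 + huv
    have hm'eq : (-τ₂) * (u * p₀.1 + v * p₁.1) + τ₁ * (u * p₀.2 + v * p₁.2) = m' := by
      rw [hm']
    have k1 : (τ₁ ^ 2 + τ₂ ^ 2) * (hQ M₁ m₁ r₁ y - (u * p₀.1 + v * p₁.1)) = 0 := by
      linear_combination τ₁ * hy2 - τ₂ * hy1 - τ₁ * hT + τ₂ * hm'eq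
    have k2 : (τ₁ ^ 2 + τ₂ ^ 2) * (hQ M₂ m₂ r₂ y - (u * p₀.2 + v * p₁.2)) = 0 := by
      linear_combination τ₂ * hy2 + τ₁ * hy1 - τ₂ * hT - τ₁ * hm'eq
    exact ⟨y, sub_eq_zero.mp ((mul_eq_zero.mp k1).resolve_left hττ),
      sub_eq_zero.mp ((mul_eq_zero.mp k2).resolve_left hττ)⟩

/-! ### Homogeneous S-lemma -/

lemma homog_slemma (hM1 : M₁.IsSymm) (hM2 : M₂.IsSymm)
    (hslater : ∃ zb, hQ M₂ m₂ r₂ zb < 0)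
    (hyp : ∀ z, hQ M₂ m₂ r₂ z ≤ 0 → 0 ≤ hQ M₁ m₁ r₁ z) :
    ∃ μ : ℝ, 0 ≤ μ ∧ ∀ z, 0 ≤ hQ M₁ m₁ r₁ z + μ * hQ M₂ m₂ r₂ z := by
  set C := {p : ℝ × ℝ | ∃ z, hQ M₁ m₁ r₁ z = p.1 ∧ hQ M₂ m₂ r₂ z = p.2} with hC
  have hCconv : Convex ℝ C := dines hM1 hM2
  set O := (Set.Iio (0:ℝ)) ×ˢ (Set.Iio (0:ℝ)) with hO
  have hOconv : Convex ℝ O := (convex_Iio _).prod (convex_Iio _)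
  have hOopen : IsOpen O := (isOpen_Iio).prod (isOpen_Iio)
  have hdisj : Disjoint O C := by
    rw [Set.disjoint_left]
    rintro p ⟨hp1, hp2⟩ ⟨z, hz1, hz2⟩
    have := hyp z (by rw [hz2]; exact le_of_lt hp2)
    rw [hz1] at this
    exact absurd this (not_le.mpr hp1)
  obtain ⟨f, uu, hfO, hfC⟩ := geometric_hahn_banach_open hOconv hOopen hCconv hdisj
  set lam1 := f (1, 0) with hlam1def
  set lam2 := f (0, 1) with hlam2def
  have hfrep : ∀ p : ℝ × ℝ, f p = p.1 * lam1 + p.2 * lam2 := by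
    intro p
    have hp : (p.1 • ((1:ℝ), (0:ℝ)) + p.2 • ((0:ℝ), (1:ℝ))) = p := by ext <;> simp
    conv_lhs => rw [← hp]
    rw [map_add, f.map_smul, f.map_smul, smul_eq_mul, smul_eq_mul]
  have h0C : ((0:ℝ), (0:ℝ)) ∈ C := ⟨(0 : (Fin n → ℝ) × ℝ), by simp [hQ], by simp [hQ]⟩
  have hu0 : uu ≤ 0 := by
    have h1 := hfC _ h0C
    rw [hfrep] at h1
    simpa using h1
  have hlam2 : 0 ≤ lam2 := by
    by_contra hcon
    push_neg at hcon
    set ε := min 1 ((-lam2) / (2 * (|lam1| + 1))) with hεdef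
    have hε : 0 < ε := lt_min one_pos (div_pos (by linarith) (by positivity))
    have hmem : ((-ε), (-1:ℝ)) ∈ O := ⟨by simpa using hε, by norm_num⟩
    have h1 := hfO _ hmem
    rw [hfrep] at h1
    have h2 : ε * (2 * (|lam1| + 1)) ≤ -lam2 :=
      (le_div_iff₀ (by positivity)).mp (min_le_right _ _)
    have h3 : ε * lam1 ≤ ε * |lam1| := mul_le_mul_of_nonneg_left (le_abs_self lam1) hε.le
    simp only at h1
    linarith
  have hlam1 : 0 ≤ lam1 := by
    by_contra hcon
    push_neg at hcon
    set ε := min 1 ((-lam1) / (2 * (|lam2| + 1))) with hεdef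
    have hε : 0 < ε := lt_min one_pos (div_pos (by linarith) (by positivity))
    have hmem : ((-1:ℝ), (-ε)) ∈ O := ⟨by norm_num, by simpa using hε⟩
    have h1 := hfO _ hmem
    rw [hfrep] at h1
    have h2 : ε * (2 * (|lam2| + 1)) ≤ -lam1 :=
      (le_div_iff₀ (by positivity)).mp (min_le_right _ _)
    have h3 : ε * lam2 ≤ ε * |lam2| := mul_le_mul_of_nonneg_left (le_abs_self lam2) hε.le
    simp only at h1
    linarith
  have hCpos : ∀ p ∈ C, 0 ≤ f p := by
    intro p hp
    by_contra hcon
    push_neg at hcon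
    have hs : 0 < (uu - 1) / f p := div_pos_of_neg_of_neg (by linarith) hcon
    obtain ⟨z, hz1, hz2⟩ := hp
    have hmem : ((uu - 1) / f p) • p ∈ C := by
      refine ⟨Real.sqrt ((uu - 1) / f p) • z, ?_, ?_⟩
      · rw [hQ_smul, Real.sq_sqrt hs.le, hz1]; simp
      · rw [hQ_smul, Real.sq_sqrt hs.le, hz2]; simp
    have h1 := hfC _ hmem
    rw [f.map_smul, smul_eq_mul] at h1
    rw [div_mul_cancel₀ _ (ne_of_lt hcon)] at h1
    linarith
  obtain ⟨zb, hzb⟩ := hslater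
  have hlam1pos : 0 < lam1 := by
    rcases eq_or_lt_of_le hlam1 with h | h
    · exfalso
      have hpb : (hQ M₁ m₁ r₁ zb, hQ M₂ m₂ r₂ zb) ∈ C := ⟨zb, rfl, rfl⟩
      have h2 := hCpos _ hpb
      rw [hfrep] at h2
      simp only at h2
      have hl2 : lam2 = 0 := by
        by_contra hne
        have hpos : 0 < lam2 := lt_of_le_of_ne hlam2 (Ne.symm hne)
        have hneg : hQ M₂ m₂ r₂ zb * lam2 < 0 := mul_neg_of_neg_of_pos hzb hpos
        rw [← h] at h2
        simp at h2
        linarith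
      have hm : ((-1:ℝ), (-1:ℝ)) ∈ O := ⟨by norm_num, by norm_num⟩
      have h3 := hfO _ hm
      rw [hfrep] at h3
      simp only at h3
      rw [← h, hl2] at h3
      norm_num at h3
      linarith [hu0]
    · exact h
  refine ⟨lam2 / lam1, div_nonneg hlam2 hlam1pos.le, ?_⟩
  intro z
  have hp : (hQ M₁ m₁ r₁ z, hQ M₂ m₂ r₂ z) ∈ C := ⟨z, rfl, rfl⟩
  have h2 := hCpos _ hp
  rw [hfrep] at h2
  simp only at h2
  have heq : (hQ M₁ m₁ r₁ z * lam1 + hQ M₂ m₂ r₂ z * lam2) / lam1 =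
      hQ M₁ m₁ r₁ z + lam2 / lam1 * hQ M₂ m₂ r₂ z := by
    field_simp
  have h3 := div_nonneg h2 hlam1pos.le
  rw [heq] at h3
  exact h3
end Hom

/-! ### Inhomogeneous and interval S-lemmas -/

section Inhom
variable {n : ℕ} {A B : Matrix (Fin n) (Fin n) ℝ} {a b : Fin n → ℝ} {c d α β : ℝ}

lemma hQ_one (M : Matrix (Fin n) (Fin n) ℝ) (m : Fin n → ℝ) (r : ℝ) (x : Fin n → ℝ) :
    hQ M m r (x, 1) = qfun M m r x := by
  simp [hQ, qfun]; try ring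

lemma hQ_scale (M : Matrix (Fin n) (Fin n) ℝ) (m : Fin n → ℝ) (r : ℝ) (x : Fin n → ℝ)
    {t : ℝ} (ht : t ≠ 0) : hQ M m r (x, t) = t ^ 2 * qfun M m r (t⁻¹ • x) := by
  have h : (x, t) = t • ((t⁻¹ • x, (1:ℝ))) := by
    have : t • (t⁻¹ • x) = x := by rw [smul_smul, mul_inv_cancel₀ ht, one_smul]
    rw [Prod.smul_mk, this, smul_eq_mul, mul_one]
  rw [h, hQ_smul, hQ_one]

lemma inhom_slemma (hA : A.IsSymm) (hB : B.IsSymm) (xb : Fin n → ℝ)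
    (hslater : qfun B b d xb < 0)
    (hyp : ∀ x, qfun B b d x ≤ 0 → 0 ≤ qfun A a c x) :
    ∃ μ : ℝ, 0 ≤ μ ∧ ∀ x, 0 ≤ qfun A a c x + μ * qfun B b d x := by
  have hyp' : ∀ z : (Fin n → ℝ) × ℝ, hQ B b d z ≤ 0 → 0 ≤ hQ A a c z := by
    rintro ⟨x, t⟩ hz
    rcases eq_or_ne t 0 with ht | ht
    · subst ht
      have hzB : x ⬝ᵥ B *ᵥ x ≤ 0 := by simpa [hQ] using hz
      show (0:ℝ) ≤ hQ A a c (x, 0)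
      have hgoal : hQ A a c (x, 0) = x ⬝ᵥ A *ᵥ x := by simp [hQ]
      rw [hgoal]
      by_contra hcon
      push_neg at hcon
      rcases le_total (xb ⬝ᵥ B *ᵥ x + b ⬝ᵥ x) 0 with hL | hL
      · obtain ⟨u, hu, hval⟩ := quad_small (x ⬝ᵥ A *ᵥ x)
          (2 * (xb ⬝ᵥ A *ᵥ x) + 2 * (a ⬝ᵥ x)) (qfun A a c xb) 0 0 hcon
        have hB' : qfun B b d (xb + u • x) ≤ 0 := by
          rw [qfun_line hB]
          nlinarith [mul_nonneg hu (neg_nonneg.2 hL),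
            mul_nonneg (mul_nonneg hu hu) (neg_nonneg.2 hzB), sq_nonneg u]
        have := hyp _ hB'
        rw [qfun_line hA] at this
        nlinarith [hval]
      · obtain ⟨u, hu, hval⟩ := quad_small (x ⬝ᵥ A *ᵥ x)
          (-(2 * (xb ⬝ᵥ A *ᵥ x) + 2 * (a ⬝ᵥ x))) (qfun A a c xb) 0 0 hcon
        have hB' : qfun B b d (xb + (-u) • x) ≤ 0 := by
          rw [qfun_line hB]
          nlinarith [mul_nonneg hu hL,
            mul_nonneg (mul_nonneg hu hu) (neg_nonneg.2 hzB), sq_nonneg u]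
        have := hyp _ hB'
        rw [qfun_line hA] at this
        nlinarith [hval]
    · rw [hQ_scale B b d x ht] at hz
      rw [hQ_scale A a c x ht]
      have ht2 : (0:ℝ) < t ^ 2 := by positivity
      have h1 : qfun B b d (t⁻¹ • x) ≤ 0 := by nlinarith
      have h2 := hyp _ h1
      positivity
  obtain ⟨μ, hμ0, hμ⟩ := homog_slemma hA hB ⟨(xb, 1), by rwa [hQ_one]⟩ hyp'
  exact ⟨μ, hμ0, fun x => by have := hμ (x, 1); rwa [hQ_one, hQ_one] at this⟩

lemma qfun_shift (e : ℝ) (x : Fin n → ℝ) : qfun B b (d - e) x = qfun B b d x - e := by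
  simp [qfun]; ring

lemma qfun_negflip (e : ℝ) (x : Fin n → ℝ) :
    qfun (-B) (-b) (e - d) x = e - qfun B b d x := by
  simp [qfun, Matrix.neg_mulVec]
  ring

lemma interval_slemma (hA : A.IsSymm) (hB : B.IsSymm) (hBne : B ≠ 0) (hαβ : α ≤ β)
    (xb : Fin n → ℝ) (hs1 : α < qfun B b d xb) (hs2 : qfun B b d xb < β)
    (hyp : ∀ x, α ≤ qfun B b d x → qfun B b d x ≤ β → 0 ≤ qfun A a c x) :
    ∃ μ : ℝ, ∀ x, 0 ≤ qfun A a c x + (-(min μ 0)) * (qfun B b d x - β)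
      + (max μ 0) * (α - qfun B b d x) := by
  by_cases hc1 : ∀ x, qfun B b d x ≤ β → 0 ≤ qfun A a c x
  · have hsl : qfun B b (d - β) xb < 0 := by rw [qfun_shift]; linarith
    obtain ⟨lam, hlam0, hlam⟩ := inhom_slemma hA hB xb hsl
      (fun x hx => hc1 x (by rw [qfun_shift] at hx; linarith))
    refine ⟨-lam, fun x => ?_⟩
    have h1 := hlam x
    rw [qfun_shift] at h1
    rw [min_eq_left (by linarith : -lam ≤ 0), max_eq_right (by linarith : -lam ≤ 0)]
    linarith [h1]
  · by_cases hc2 : ∀ x, α ≤ qfun B b d x → 0 ≤ qfun A a c x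
    · have hB' : (-B).IsSymm := by
        unfold Matrix.IsSymm
        rw [Matrix.transpose_neg, hB]
      have hsl : qfun (-B) (-b) (α - d) xb < 0 := by rw [qfun_negflip]; linarith
      obtain ⟨lam, hlam0, hlam⟩ := inhom_slemma hA hB' xb hsl
        (fun x hx => hc2 x (by rw [qfun_negflip] at hx; linarith))
      refine ⟨lam, fun x => ?_⟩
      have h1 := hlam x
      rw [qfun_negflip] at h1
      rw [min_eq_right (by linarith : (0:ℝ) ≤ lam), max_eq_left (by linarith : (0:ℝ) ≤ lam)]
      linarith [h1]
    · exfalso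
      push_neg at hc1 hc2
      obtain ⟨x₁, hx₁h, hx₁f⟩ := hc1
      obtain ⟨x₂, hx₂h, hx₂f⟩ := hc2
      have hx₁α : qfun B b d x₁ < α := by
        by_contra hcon
        push_neg at hcon
        exact absurd (hyp x₁ hcon hx₁h) (not_le.mpr hx₁f)
      have hx₂β : β < qfun B b d x₂ := by
        by_contra hcon
        push_neg at hcon
        exact absurd (hyp x₂ hx₂h hcon) (not_le.mpr hx₂f)
      exact hBne (key_lemma hA hB hαβ hyp x₁ x₂ hx₁f hx₁α hx₂f hx₂β)
end Inhom

/-- Strong Lagrangian duality for the interval bounded generalized trust region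
subproblem, under `B ≠ 0` and the Slater condition. -/
theorem gtrs_strong_duality (n : ℕ) (hn : 0 < n)
    (A B : Matrix (Fin n) (Fin n) ℝ) (hA : A.IsSymm) (hB : B.IsSymm)
    (a b : Fin n → ℝ) (c d : ℝ) (α β : ℝ) (hαβ : α < β)
    (hBne : B ≠ 0)
    (hSlater : ∃ xbar : Fin n → ℝ, α < qfun B b d xbar ∧ qfun B b d xbar < β) :
    (⨅ x ∈ {x : Fin n → ℝ | α ≤ qfun B b d x ∧ qfun B b d x ≤ β},
        ((qfun A a c x : ℝ) : EReal)) =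
      ⨆ μ : ℝ, ⨅ x : Fin n → ℝ,
        ((qfun A a c x + (-(min μ 0)) * (qfun B b d x - β)
          + (max μ 0) * (α - qfun B b d x) : ℝ) : EReal) := by
  obtain ⟨xb, hxb1, hxb2⟩ := hSlater
  have hxbS : xb ∈ {x : Fin n → ℝ | α ≤ qfun B b d x ∧ qfun B b d x ≤ β} :=
    ⟨hxb1.le, hxb2.le⟩
  apply le_antisymm
  · -- strong direction
    set P := ⨅ x ∈ {x : Fin n → ℝ | α ≤ qfun B b d x ∧ qfun B b d x ≤ β},
        ((qfun A a c x : ℝ) : EReal) with hPdef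
    by_cases hbot : P = ⊥
    · rw [hbot]; exact bot_le
    · have hPle : P ≤ ((qfun A a c xb : ℝ) : EReal) := iInf₂_le xb hxbS
      have htop : P ≠ ⊤ := ne_top_of_le_ne_top (EReal.coe_ne_top _) hPle
      set p := P.toReal with hpdef
      have hPp : (p : EReal) = P := EReal.coe_toReal htop hbot
      have hplb : ∀ x, α ≤ qfun B b d x → qfun B b d x ≤ β → p ≤ qfun A a c x := by
        intro x h1 h2
        have h3 : P ≤ ((qfun A a c x : ℝ) : EReal) := iInf₂_le x ⟨h1, h2⟩
        rw [← hPp] at h3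
        exact EReal.coe_le_coe_iff.mp h3
      have hyp : ∀ x, α ≤ qfun B b d x → qfun B b d x ≤ β → 0 ≤ qfun A a (c - p) x := by
        intro x h1 h2
        rw [qfun_shift]
        linarith [hplb x h1 h2]
      obtain ⟨μ, hμ⟩ := interval_slemma hA hB hBne hαβ.le xb hxb1 hxb2 hyp
      have hle2 : (p : EReal) ≤ ⨅ x : Fin n → ℝ,
          ((qfun A a c x + (-(min μ 0)) * (qfun B b d x - β)
            + (max μ 0) * (α - qfun B b d x) : ℝ) : EReal) := by
        apply le_iInf
        intro x
        rw [EReal.coe_le_coe_iff]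
        have h4 := hμ x
        rw [qfun_shift] at h4
        linarith
      calc P = (p : EReal) := hPp.symm
        _ ≤ _ := hle2
        _ ≤ _ := le_iSup (fun μ' : ℝ => ⨅ x : Fin n → ℝ,
            ((qfun A a c x + (-(min μ' 0)) * (qfun B b d x - β)
              + (max μ' 0) * (α - qfun B b d x) : ℝ) : EReal)) μ
  · -- weak duality
    apply iSup_le
    intro μ
    apply le_iInf₂
    intro x hx
    have h1 : (⨅ x' : Fin n → ℝ, ((qfun A a c x' + (-(min μ 0)) * (qfun B b d x' - β)
        + (max μ 0) * (α - qfun B b d x') : ℝ) : EReal)) ≤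
        ((qfun A a c x + (-(min μ 0)) * (qfun B b d x - β)
          + (max μ 0) * (α - qfun B b d x) : ℝ) : EReal) := iInf_le _ x
    refine le_trans h1 (EReal.coe_le_coe_iff.mpr ?_)
    have t1 : (-(min μ 0)) * (qfun B b d x - β) ≤ 0 :=
      mul_nonpos_of_nonneg_of_nonpos (by simp [min_le_right μ 0])
        (by linarith [hx.2])
    have t2 : (max μ 0) * (α - qfun B b d x) ≤ 0 :=
      mul_nonpos_of_nonneg_of_nonpos (le_max_right μ 0) (by linarith [hx.1])
    linarith
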